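/- Let 𝔤 be a finite-dimensional real Lie algebra with a nondegenerate invariant symmetric bilinear form B (invariance: B([ξ, η], ζ) + B(η, [ξ, ζ]) = 0 for all ξ, η, ζ). Let 𝔭₊, 𝔭₋ ⊆ 𝔤 be Lie subalgebras whose B-orthogonal complements satisfy 𝔭₊^⊥ = 𝔲₊ ⊆ 𝔭₊ and 𝔭₋^⊥ = 𝔲₋ ⊆ 𝔭₋, set 𝔥 := 𝔭₊ ∩ 𝔭₋, and assume 𝔤 = 𝔲₊ ⊕ 𝔥 ⊕ 𝔲₋ as vector spaces. Equip the direct-sum Lie algebra 𝔥 ⊕ 𝔤 with the bilinear form B̃((x, y), (x', y')) := B(x, x') − B(y, y'). Then for each sign ±, the set 𝔠± := {(x, y) ∈ 𝔥 ⊕ 𝔤 : y − x ∈ 𝔲±} is a Lie subalgebra of 𝔥 ⊕ 𝔤, and the B̃-orthogonal complement of 𝔠± is contained in 𝔠± (i.e. 𝔠± is coisotropic with respect to B̃). -/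

import Mathlib

/-! Prod of Lie algebras, with componentwise bracket (the direct-sum Lie algebra 𝔥 ⊕ 𝔤). -/

section ProdLie
variable {L M : Type*} [LieRing L] [LieRing M]

instance prodBracket : Bracket (L × M) (L × M) :=
  ⟨fun p q => (⁅p.1, q.1⁆, ⁅p.2, q.2⁆)⟩

@[simp] theorem prod_bracket_fst (p q : L × M) : ⁅p, q⁆.1 = ⁅p.1, q.1⁆ := rfl
@[simp] theorem prod_bracket_snd (p q : L × M) : ⁅p, q⁆.2 = ⁅p.2, q.2⁆ := rfl

instance prodLieRing : LieRing (L × M) where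
  toBracket := prodBracket
  add_lie x y z := by ext <;> simp [add_lie]
  lie_add x y z := by ext <;> simp [lie_add]
  lie_self x := by ext <;> simp
  leibniz_lie x y z := by
    ext <;> simp only [prod_bracket_fst, prod_bracket_snd, Prod.fst_add, Prod.snd_add] <;>
      exact leibniz_lie _ _ _

instance prodLieAlgebra {R : Type*} [CommRing R] [LieAlgebra R L] [LieAlgebra R M] :
    LieAlgebra R (L × M) where
  lie_smul t x y := by ext <;> simp

end ProdLie


lemma key_aux {L : Type*} [LieRing L] [LieAlgebra ℝ L]
    (B : LinearMap.BilinForm ℝ L)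
    (hBinv : ∀ ξ η ζ : L, B ⁅ξ, η⁆ ζ + B η ⁅ξ, ζ⁆ = 0)
    (pP H : LieSubalgebra ℝ L) (uP : Submodule ℝ L)
    (huP : (uP : Set L) = {x : L | ∀ p ∈ pP, B x p = 0})
    (hHle : ∀ x ∈ H, x ∈ pP)
    (huPsub : ∀ x ∈ uP, x ∈ pP)
    (hperp : ∀ y : L, (∀ u ∈ uP, B y u = 0) → y ∈ pP)
    (hdecomp : ∀ x ∈ pP, ∃ u ∈ uP, ∃ h ∈ H, x = u + h)
    (hndH : ∀ h ∈ H, (∀ h' ∈ H, B h h' = 0) → h = 0) :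
    (∃ K : LieSubalgebra ℝ (↥H × L),
        (K : Set (↥H × L)) = {p : ↥H × L | p.2 - (p.1 : L) ∈ uP}) ∧
    (∀ p : ↥H × L,
        (∀ q : ↥H × L, q.2 - (q.1 : L) ∈ uP →
          B (p.1 : L) (q.1 : L) - B p.2 q.2 = 0) →
        p.2 - (p.1 : L) ∈ uP) := by
  have huP' : ∀ x : L, x ∈ uP ↔ ∀ p ∈ pP, B x p = 0 := fun x => by
    rw [← SetLike.mem_coe, huP]; rfl
  have hideal : ∀ p ∈ pP, ∀ u ∈ uP, ⁅p, u⁆ ∈ uP := by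
    intro p hp u hu
    rw [huP']
    intro p' hp'
    have h1 := hBinv p u p'
    have h2 : B u ⁅p, p'⁆ = 0 := (huP' u).mp hu _ (pP.lie_mem hp hp')
    linarith
  constructor
  · refine ⟨{ carrier := {p : ↥H × L | p.2 - (p.1 : L) ∈ uP}
              add_mem' := ?_
              zero_mem' := ?_
              smul_mem' := ?_
              lie_mem' := ?_ }, rfl⟩
    · intro a b ha hb
      have := uP.add_mem ha hb
      simpa [add_sub_add_comm] using this
    · simp
    · intro c a ha
      have := uP.smul_mem c ha
      simpa [smul_sub] using this
    · intro a b ha hb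
      show ⁅a, b⁆.2 - ((⁅a, b⁆.1 : ↥H) : L) ∈ uP
      have hb2 : (b.2 : L) ∈ pP := by
        have hbe : b.2 = (b.2 - (b.1 : L)) + (b.1 : L) := by abel
        rw [hbe]
        exact pP.add_mem (huPsub _ hb) (hHle _ b.1.2)
      have key2 : ⁅a.2, b.2⁆ - ⁅(a.1 : L), (b.1 : L)⁆ =
          ⁅a.2 - (a.1 : L), b.2⁆ + ⁅(a.1 : L), b.2 - (b.1 : L)⁆ := by
        simp only [sub_lie, lie_sub]; abel
      simp only [prod_bracket_fst, prod_bracket_snd, LieSubalgebra.coe_bracket]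
      rw [key2]
      refine uP.add_mem ?_ (hideal _ (hHle _ a.1.2) _ hb)
      have h1 : ⁅b.2, a.2 - (a.1 : L)⁆ ∈ uP := hideal _ hb2 _ ha
      have h2 := uP.neg_mem h1
      rwa [lie_skew] at h2
  · intro p hp
    have hy : p.2 ∈ pP := by
      refine hperp _ (fun u hu => ?_)
      have h0 := hp (0, u) (by simpa using hu)
      simpa using h0.symm
    have hsub : p.2 - (p.1 : L) ∈ pP := pP.sub_mem hy (hHle _ p.1.2)
    obtain ⟨u, hu, h, hh, heq⟩ := hdecomp _ hsub
    have horth : ∀ h' ∈ H, B (p.2 - (p.1 : L)) h' = 0 := by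
      intro h' hh'
      have h0 := hp (⟨h', hh'⟩, h') (by simp)
      have he : B (p.2 - (p.1 : L)) h' = B p.2 h' - B (p.1 : L) h' := by
        simp [map_sub, LinearMap.sub_apply]
      rw [he]
      simp only at h0
      linarith
    have hH0 : h = 0 := by
      refine hndH h hh (fun h' hh' => ?_)
      have h1 := horth h' hh'
      have h2 : B u h' = 0 := (huP' u).mp hu h' (hHle h' hh')
      rw [heq] at h1
      have h3 : B (u + h) h' = B u h' + B h h' := by
        simp [map_add, LinearMap.add_apply]
      rw [h3] at h1
      linarith
    rw [heq, hH0, add_zero]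
    exact hu

/-- Given a Manin-pair-type decomposition `𝔤 = 𝔲₊ ⊕ 𝔥 ⊕ 𝔲₋` with `𝔭±^⊥ = 𝔲± ⊆ 𝔭±` and
`𝔥 = 𝔭₊ ∩ 𝔭₋`, the sets `𝔠± = {(x, y) ∈ 𝔥 ⊕ 𝔤 : y − x ∈ 𝔲±}` are Lie subalgebras of the
direct-sum Lie algebra `𝔥 ⊕ 𝔤` which are coisotropic for `B̃((x,y),(x',y')) = B(x,x') − B(y,y')`. -/
theorem fission_subgroups_coisotropic {L : Type*} [LieRing L] [LieAlgebra ℝ L]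
    [FiniteDimensional ℝ L]
    (B : LinearMap.BilinForm ℝ L)
    (hsymm : ∀ x y : L, B x y = B y x)
    (hnd : ∀ x : L, (∀ y : L, B x y = 0) → x = 0)
    (hBinv : ∀ ξ η ζ : L, B ⁅ξ, η⁆ ζ + B η ⁅ξ, ζ⁆ = 0)
    (pP pM : LieSubalgebra ℝ L) (uP uM : Submodule ℝ L)
    (huP : (uP : Set L) = {x : L | ∀ p ∈ pP, B x p = 0})
    (huM : (uM : Set L) = {x : L | ∀ p ∈ pM, B x p = 0})
    (huPsub : ∀ x ∈ uP, x ∈ pP)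
    (huMsub : ∀ x ∈ uM, x ∈ pM)
    (hdirect : DirectSum.IsInternal
      (![uP, (pP ⊓ pM : LieSubalgebra ℝ L).toSubmodule, uM] : Fin 3 → Submodule ℝ L)) :
    -- `𝔠₊` is a Lie subalgebra of `𝔥 ⊕ 𝔤` ...
    (∃ K : LieSubalgebra ℝ (↥(pP ⊓ pM) × L),
        (K : Set (↥(pP ⊓ pM) × L)) = {p : ↥(pP ⊓ pM) × L | p.2 - (p.1 : L) ∈ uP}) ∧
    -- ... which is coisotropic with respect to `B̃`
    (∀ p : ↥(pP ⊓ pM) × L,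
        (∀ q : ↥(pP ⊓ pM) × L, q.2 - (q.1 : L) ∈ uP →
          B (p.1 : L) (q.1 : L) - B p.2 q.2 = 0) →
        p.2 - (p.1 : L) ∈ uP) ∧
    -- and likewise for `𝔠₋`:
    (∃ K : LieSubalgebra ℝ (↥(pP ⊓ pM) × L),
        (K : Set (↥(pP ⊓ pM) × L)) = {p : ↥(pP ⊓ pM) × L | p.2 - (p.1 : L) ∈ uM}) ∧
    (∀ p : ↥(pP ⊓ pM) × L,
        (∀ q : ↥(pP ⊓ pM) × L, q.2 - (q.1 : L) ∈ uM →
          B (p.1 : L) (q.1 : L) - B p.2 q.2 = 0) →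
        p.2 - (p.1 : L) ∈ uM) := by
  
  set H : LieSubalgebra ℝ L := pP ⊓ pM with hH
  set f : Fin 3 → Submodule ℝ L := ![uP, H.toSubmodule, uM] with hf
  have huP' : ∀ x : L, x ∈ uP ↔ ∀ p ∈ pP, B x p = 0 := fun x => by
    rw [← SetLike.mem_coe, huP]; rfl
  have huM' : ∀ x : L, x ∈ uM ↔ ∀ p ∈ pM, B x p = 0 := fun x => by
    rw [← SetLike.mem_coe, huM]; rfl
  have hrefl : B.IsRefl := fun x y h => by rw [hsymm]; exact h
  have hndB : B.Nondegenerate := (LinearMap.IsRefl.nondegenerate_iff_separatingLeft hrefl).mpr hnd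
  -- double orthogonal complements
  have hperp_gen : ∀ (p : LieSubalgebra ℝ L) (u : Submodule ℝ L),
      ((u : Set L) = {x : L | ∀ q ∈ p, B x q = 0}) →
      ∀ y : L, (∀ v ∈ u, B y v = 0) → y ∈ p := by
    intro p u hu y hy
    have hu' : ∀ x : L, x ∈ u ↔ ∀ q ∈ p, B x q = 0 := fun x => by
      rw [← SetLike.mem_coe, hu]; rfl
    have hueq : u = B.orthogonal p.toSubmodule := by
      ext x
      rw [hu', LinearMap.BilinForm.mem_orthogonal_iff]
      constructor
      · intro hx n hn
        show B n x = 0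
        rw [hsymm]
        exact hx n hn
      · intro hx q hq
        rw [hsymm]
        exact hx q hq
    have hyo : y ∈ B.orthogonal (B.orthogonal p.toSubmodule) := by
      intro n hn
      have hnu : n ∈ u := by rw [hueq]; exact hn
      show B n y = 0
      rw [hsymm]
      exact hy n hnu
    rwa [LinearMap.BilinForm.orthogonal_orthogonal hndB hrefl] at hyo
  have hperpP := hperp_gen pP uP huP
  have hperpM := hperp_gen pM uM huM
  -- spanning
  have htop : ∀ x : L, ∃ u ∈ uP, ∃ h ∈ H, ∃ m ∈ uM, x = u + h + m := by
    intro x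
    have h1 : (⨆ i, f i) = ⊤ := hdirect.submodule_iSup_eq_top
    have h2 : x ∈ uP ⊔ (H.toSubmodule ⊔ uM) := by
      have hle : (⨆ i, f i) ≤ uP ⊔ (H.toSubmodule ⊔ uM) := by
        refine iSup_le ?_
        intro i
        fin_cases i
        · exact le_sup_left
        · exact le_trans le_sup_left le_sup_right
        · exact le_trans le_sup_right le_sup_right
      exact hle (h1 ▸ Submodule.mem_top)
    obtain ⟨u, hu, y, hy, rfl⟩ := Submodule.mem_sup.mp h2
    obtain ⟨h, hh, m, hm, rfl⟩ := Submodule.mem_sup.mp hy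
    exact ⟨u, hu, h, hh, m, hm, (add_assoc _ _ _).symm⟩
  -- disjointness
  have hpd := hdirect.submodule_iSupIndep.pairwiseDisjoint
  have hd1P : ∀ x, x ∈ H → x ∈ uP → x = 0 := by
    intro x hx hx'
    have hd : Disjoint (f 1) (f 0) := hpd (by decide : (1 : Fin 3) ≠ 0)
    exact Submodule.disjoint_def.mp hd x hx hx'
  have hd1M : ∀ x, x ∈ H → x ∈ uM → x = 0 := by
    intro x hx hx'
    have hd : Disjoint (f 1) (f 2) := hpd (by decide : (1 : Fin 3) ≠ 2)
    exact Submodule.disjoint_def.mp hd x hx hx'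
  -- decompositions
  have hdecompP : ∀ x ∈ pP, ∃ u ∈ uP, ∃ h ∈ H, x = u + h := by
    intro x hx
    obtain ⟨u, hu, h, hh, m, hm, heq⟩ := htop x
    have hm0 : m = 0 := by
      refine hd1M m ⟨?_, huMsub m hm⟩ hm
      have : m = x - u - h := by rw [heq]; abel
      rw [this]
      exact pP.sub_mem (pP.sub_mem hx (huPsub u hu)) hh.1
    refine ⟨u, hu, h, hh, ?_⟩
    rw [heq, hm0, add_zero]
  have hdecompM : ∀ x ∈ pM, ∃ u ∈ uM, ∃ h ∈ H, x = u + h := by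
    intro x hx
    obtain ⟨u, hu, h, hh, m, hm, heq⟩ := htop x
    have hu0 : u = 0 := by
      refine hd1P u ⟨huPsub u hu, ?_⟩ hu
      have : u = x - h - m := by rw [heq]; abel
      rw [this]
      exact pM.sub_mem (pM.sub_mem hx hh.2) (huMsub m hm)
    refine ⟨m, hm, h, hh, ?_⟩
    rw [heq, hu0, zero_add, add_comm]
  -- nondegeneracy on H
  have hndH : ∀ h ∈ H, (∀ h' ∈ H, B h h' = 0) → h = 0 := by
    intro h hh hho
    refine hnd h (fun y => ?_)
    obtain ⟨u, hu, h', hh', m, hm, rfl⟩ := htop y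
    have h1 : B h u = 0 := by rw [hsymm]; exact (huP' u).mp hu h hh.1
    have h2 : B h h' = 0 := hho h' hh'
    have h3 : B h m = 0 := by rw [hsymm]; exact (huM' m).mp hm h hh.2
    simp [map_add, h1, h2, h3]
  have r1 := key_aux B hBinv pP H uP huP (fun x hx => hx.1) huPsub hperpP hdecompP hndH
  have r2 := key_aux B hBinv pM H uM huM (fun x hx => hx.2) huMsub hperpM hdecompM hndH
  exact ⟨r1.1, r1.2, r2.1, r2.2⟩
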